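/- In the 3-level Ξ-configuration JC heat-parametrix expansion, every odd-index term b_{−2j−1}(t,X) has all diagonal entries equal to zero, hence Tr(b_{−2j−1}(t,X)) = 0 for all j ≥ 0, t ≥ 0, X ≠ 0. -/

import Mathlib

attribute [local instance] Matrix.linftyOpNormedAddCommGroup Matrix.linftyOpNormedSpace
  Matrix.linftyOpNormedRing Matrix.linftyOpNormedAlgebra

open MeasureTheory

/-- The `(i,k)` entry map on `3×3` complex matrices, as a continuous linear map. -/
private noncomputable def entryCLM (i k : Fin 3) : Matrix (Fin 3) (Fin 3) ℂ →L[ℂ] ℂ :=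
  LinearMap.toContinuousLinearMap
    { toFun := fun M => M i k
      map_add' := fun _ _ => rfl
      map_smul' := fun _ _ => rfl }

private lemma entry_integral_zero (f : ℝ → Matrix (Fin 3) (Fin 3) ℂ) (i k : Fin 3)
    (u v : ℝ) (h : ∀ t', f t' i k = 0) :
    (∫ t' in u..v, f t') i k = 0 := by
  by_cases hf : @IntervalIntegrable _ PseudoMetricSpace.toUniformSpace.toTopologicalSpace inferInstance f volume u v
  · have hc := (entryCLM i k).intervalIntegral_comp_comm hf
    have he : (∫ t' in u..v, f t') i k = entryCLM i k (∫ t' in u..v, f t') := by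
      rfl
    rw [he]
    erw [← hc]
    exact (intervalIntegral.integral_congr (fun x _ => h x)).trans (by simp)
  · rw [intervalIntegral.integral_undef hf]
    rfl

theorem xi_jc_odd_terms_trace_zero
    (a₀ : Matrix (Fin 3) (Fin 3) ℂ)
    (a₁ : ℝ × ℝ → Matrix (Fin 3) (Fin 3) ℂ)
    (p₂ : ℝ × ℝ → ℝ)
    (ha0 : ∀ j k : Fin 3, j ≠ k → a₀ j k = 0)
    (ha1 : ∀ X, ∀ j k : Fin 3, ((j : ℤ) - (k : ℤ)).natAbs ≠ 1 → a₁ X j k = 0)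
    (b : ℕ → ℝ → ℝ × ℝ → Matrix (Fin 3) (Fin 3) ℂ)
    (hb0 : ∀ t X, b 0 t X = Real.exp (-(t * p₂ X)) • (1 : Matrix (Fin 3) (Fin 3) ℂ))
    (hb1 : ∀ t X, b 1 t X = (-(t * Real.exp (-(t * p₂ X)))) • a₁ X)
    (hbr : ∀ j, 2 ≤ j → ∀ t X, b j t X =
      -∫ t' in (0 : ℝ)..t,
        Real.exp (-((t - t') * p₂ X)) • (a₀ * b (j - 2) t' X + a₁ X * b (j - 1) t' X)) :
    ∀ (j : ℕ) (t : ℝ), 0 ≤ t → ∀ X : ℝ × ℝ, X ≠ 0 →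
      (∀ i : Fin 3, b (2 * j + 1) t X i i = 0) ∧ (b (2 * j + 1) t X).trace = 0 := by
  -- Combinatorial facts about positions in a 3×3 matrix.
  have dec1 : ∀ i k m : Fin 3, ((i : ℤ) - (k : ℤ)).natAbs = 1 →
      ((i : ℤ) - (m : ℤ)).natAbs = 1 → ((m : ℤ) - (k : ℤ)).natAbs ≠ 1 := by decide
  have dec2 : ∀ i k m : Fin 3, ((i : ℤ) - (k : ℤ)).natAbs ≠ 1 →
      ((i : ℤ) - (m : ℤ)).natAbs = 1 → ((m : ℤ) - (k : ℤ)).natAbs = 1 := by decide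
  -- Main induction: even terms vanish on the off-diagonal band, odd terms off it.
  have key : ∀ j : ℕ, ∀ (t : ℝ) (X : ℝ × ℝ),
      (Even j → ∀ i k : Fin 3, ((i : ℤ) - (k : ℤ)).natAbs = 1 → b j t X i k = 0) ∧
      (¬ Even j → ∀ i k : Fin 3, ((i : ℤ) - (k : ℤ)).natAbs ≠ 1 → b j t X i k = 0) := by
    intro j
    induction j using Nat.strong_induction_on with
    | _ j IH =>
      match j with
      | 0 =>
        intro t X
        refine ⟨fun _ i k hik => ?_, fun h => absurd Even.zero h⟩
        have hik' : i ≠ k := by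
          intro h; subst h; simp at hik
        rw [hb0]
        simp [Matrix.smul_apply, Matrix.one_apply, hik']
      | 1 =>
        intro t X
        refine ⟨fun h => absurd h (by decide), fun _ i k hik => ?_⟩
        rw [hb1]
        simp [Matrix.smul_apply, ha1 X i k hik]
      | (j + 2) =>
        intro t X
        have IH2 := IH j (by omega)
        have IH1 := IH (j + 1) (by omega)
        have e1 : j + 2 - 2 = j := by omega
        have e2 : j + 2 - 1 = j + 1 := by omega
        have hrec := hbr (j + 2) (by omega) t X
        rw [e1, e2] at hrec
        constructor
        · intro hev i k hik
          have hevj : Even j := by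
            rcases hev with ⟨m, hm⟩; exact ⟨m - 1, by omega⟩
          have hoddj1 : ¬ Even (j + 1) := by
            rintro ⟨m, hm⟩; rcases hevj with ⟨n, hn⟩; omega
          rw [hrec, Matrix.neg_apply, neg_eq_zero]
          apply entry_integral_zero
          intro t'
          have hA : (a₀ * b j t' X) i k = 0 := by
            rw [Matrix.mul_apply]
            apply Finset.sum_eq_zero
            intro m _
            by_cases hm : i = m
            · subst hm
              rw [(IH2 t' X).1 hevj i k hik, mul_zero]
            · rw [ha0 i m hm, zero_mul]
          have hB : (a₁ X * b (j + 1) t' X) i k = 0 := by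
            rw [Matrix.mul_apply]
            apply Finset.sum_eq_zero
            intro m _
            by_cases hm : ((i : ℤ) - (m : ℤ)).natAbs = 1
            · rw [(IH1 t' X).2 hoddj1 m k (dec1 i k m hik hm), mul_zero]
            · rw [ha1 X i m hm, zero_mul]
          simp [Matrix.smul_apply, Matrix.add_apply, hA, hB]
        · intro hodd i k hik
          have hoddj : ¬ Even j := by
            intro h; rcases h with ⟨m, hm⟩; exact hodd ⟨m + 1, by omega⟩
          have hevj1 : Even (j + 1) := by
            rcases Nat.even_or_odd j with h | h
            · exact absurd h hoddj
            · rcases h with ⟨m, hm⟩; exact ⟨m + 1, by omega⟩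
          rw [hrec, Matrix.neg_apply, neg_eq_zero]
          apply entry_integral_zero
          intro t'
          have hA : (a₀ * b j t' X) i k = 0 := by
            rw [Matrix.mul_apply]
            apply Finset.sum_eq_zero
            intro m _
            by_cases hm : i = m
            · subst hm
              rw [(IH2 t' X).2 hoddj i k hik, mul_zero]
            · rw [ha0 i m hm, zero_mul]
          have hB : (a₁ X * b (j + 1) t' X) i k = 0 := by
            rw [Matrix.mul_apply]
            apply Finset.sum_eq_zero
            intro m _
            by_cases hm : ((i : ℤ) - (m : ℤ)).natAbs = 1
            · rw [(IH1 t' X).1 hevj1 m k (dec2 i k m hik hm), mul_zero]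
            · rw [ha1 X i m hm, zero_mul]
          simp [Matrix.smul_apply, Matrix.add_apply, hA, hB]
  intro j t _ X _
  have hodd : ¬ Even (2 * j + 1) := by
    rintro ⟨m, hm⟩; omega
  have hdiag : ∀ i : Fin 3, b (2 * j + 1) t X i i = 0 := fun i =>
    (key (2 * j + 1) t X).2 hodd i i (by simp)
  refine ⟨hdiag, ?_⟩
  simp [Matrix.trace, Matrix.diag, hdiag]
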